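/- Let R be a commutative ring, M an R-module, N a submodule of M, and I an ideal of R. Then I is a nil clean ideal of R if and only if I(N) = {(r, n) : r ∈ I, n ∈ N} is a nil clean ideal of the idealization R(M). -/

import Mathlib

def IsNilCleanIdeal {R : Type*} [CommRing R] (I : Ideal R) : Prop :=
  ∀ x ∈ I, ∃ e n : R, IsIdempotentElem e ∧ IsNilpotent n ∧ x = e + n

/-- `I` is a nil clean ideal of `R` iff the ideal `I(N) = {(r, n) : r ∈ I, n ∈ N}` is a nil
clean ideal of the idealization `R(M)`. -/
theorem nilCleanIdeal_iff_idealization {R M : Type*} [CommRing R] [AddCommGroup M]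
    [Module R M] [Module Rᵐᵒᵖ M] [IsCentralScalar R M] (I : Ideal R) (N : Submodule R M) :
    IsNilCleanIdeal I ↔
      ∀ x : TrivSqZeroExt R M, x.fst ∈ I → x.snd ∈ N →
        ∃ e n : TrivSqZeroExt R M, IsIdempotentElem e ∧ IsNilpotent n ∧ x = e + n := by
  constructor
  · intro h x hx _
    obtain ⟨e, n, he, ⟨k, hk⟩, hen⟩ := h x.fst hx
    refine ⟨TrivSqZeroExt.inl e, TrivSqZeroExt.inl n + TrivSqZeroExt.inr x.snd, ?_, ⟨k + 1, ?_⟩, ?_⟩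
    · unfold IsIdempotentElem
      rw [← TrivSqZeroExt.inl_mul, he]
    · apply TrivSqZeroExt.ext
      · simp [pow_succ, hk]
      · rw [TrivSqZeroExt.snd_pow]
        simp [Nat.pred_succ, hk]
    · apply TrivSqZeroExt.ext <;> simp [hen]
  · intro h x hx
    obtain ⟨e, n, he, ⟨k, hk⟩, hen⟩ := h (TrivSqZeroExt.inl x) (by simpa) (by simp)
    refine ⟨e.fst, n.fst, ?_, ⟨k, ?_⟩, ?_⟩
    · have := congrArg TrivSqZeroExt.fst he
      simpa [IsIdempotentElem] using this
    · have := congrArg TrivSqZeroExt.fst hk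
      simpa using this
    · have := congrArg TrivSqZeroExt.fst hen
      simpa using this
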